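/- Let X be a (75,32,10,16) strongly regular graph in which every 4-clique is contained in a 5-clique and every vertex outside any 5-clique has exactly two neighbors in it. Let K5 be a 5-clique and X_{i,j} the set of vertices outside K5 adjacent exactly to k_i and k_j on K5. Then the induced subgraph on each X_{i,j} is isomorphic to one of: the empty graph on 7 vertices, the disjoint union of a triangle and 4 isolated vertices, or the disjoint union of two triangles and one isolated vertex. -/
import Mathlib


open Finset

/-- The number of neighbors of `x` inside the vertex set `K`. -/
def nbrs {V : Type*} [DecidableEq V] (G : SimpleGraph V) [DecidableRel G.Adj]
    (K : Finset V) (x : V) : ℕ :=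
  (K.filter (fun y => G.Adj x y)).card

/-- The number of vertices outside `K` with exactly `i` neighbors in `K`. -/
def bcount {V : Type*} [Fintype V] [DecidableEq V] (G : SimpleGraph V) [DecidableRel G.Adj]
    (K : Finset V) (i : ℕ) : ℕ :=
  ((univ \ K).filter (fun x => nbrs G K x = i)).card


/-- Disjoint union of a triangle (on `{0,1,2}`) and 4 isolated vertices. -/
def triangleOne : SimpleGraph (Fin 7) :=
  SimpleGraph.fromRel (fun a b => a.val < 3 ∧ b.val < 3)

/-- Disjoint union of two triangles (on `{0,1,2}` and `{3,4,5}`) and one isolated vertex. -/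
def triangleTwo : SimpleGraph (Fin 7) :=
  SimpleGraph.fromRel (fun a b =>
    (a.val < 3 ∧ b.val < 3) ∨ (3 ≤ a.val ∧ a.val < 6 ∧ 3 ≤ b.val ∧ b.val < 6))

/-! ### Auxiliary lemmas -/

lemma card_four' {V : Type*} [DecidableEq V] {s : Finset V} (h : s.card = 4) :
    ∃ p q r t, p ≠ q ∧ p ≠ r ∧ p ≠ t ∧ q ≠ r ∧ q ≠ t ∧ r ≠ t ∧ s = {p, q, r, t} := by
  rw [show (4:ℕ) = 3 + 1 from rfl, Finset.card_eq_succ] at h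
  obtain ⟨p, u, hpu, rfl, hu⟩ := h
  obtain ⟨q, r, t, hqr, hqt, hrt, rfl⟩ := Finset.card_eq_three.1 hu
  simp only [Finset.mem_insert, Finset.mem_singleton, not_or] at hpu
  exact ⟨p, q, r, t, hpu.1, hpu.2.1, hpu.2.2, hqr, hqt, hrt, rfl⟩

def pick7 {V : Type*} (x y z p q r t : V) : Fin 7 → V
  | ⟨0, _⟩ => x | ⟨1, _⟩ => y | ⟨2, _⟩ => z | ⟨3, _⟩ => p
  | ⟨4, _⟩ => q | ⟨5, _⟩ => r | ⟨6, _⟩ => t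

lemma iso_builder {V : Type*} [DecidableEq V] (G : SimpleGraph V) [DecidableRel G.Adj]
    (S : Finset V) (hcard : S.card = 7)
    (H : SimpleGraph (Fin 7)) (f : Fin 7 → V) (hf : ∀ i, f i ∈ S)
    (hinj : Function.Injective f)
    (hadj : ∀ i j, G.Adj (f i) (f j) ↔ H.Adj i j) :
    Nonempty (G.induce (S : Set V) ≃g H) := by
  classical
  let g : Fin 7 → (S : Set V) := fun i => ⟨f i, hf i⟩
  have hginj : Function.Injective g := fun i j h => hinj (congrArg Subtype.val h)
  have hcard' : Fintype.card (Fin 7) = Fintype.card (S : Set V) := by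
    simp [Fintype.card_coe, hcard]
  have hbij : Function.Bijective g :=
    (Fintype.bijective_iff_injective_and_card g).2 ⟨hginj, hcard'⟩
  refine ⟨(RelIso.mk (Equiv.ofBijective g hbij) ?_ : H ≃g G.induce (S : Set V)).symm⟩
  intro i j
  exact hadj i j

section Main

variable {V : Type*} [Fintype V] [DecidableEq V]
  (G : SimpleGraph V) [DecidableRel G.Adj]

lemma mem_S_iff (K : Finset V) {a b : V} {x : V}
    (hx : x ∈ (univ \ K).filter (fun x => K.filter (fun y => G.Adj x y) = {a, b})) :
    x ∉ K ∧ G.Adj x a ∧ G.Adj x b ∧ K.filter (fun y => G.Adj x y) = {a, b} := by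
  simp only [Finset.mem_filter, Finset.mem_sdiff, Finset.mem_univ, true_and] at hx
  obtain ⟨hxK, hfil⟩ := hx
  have hxa : a ∈ K.filter (fun y => G.Adj x y) := by rw [hfil]; simp
  have hxb : b ∈ K.filter (fun y => G.Adj x y) := by rw [hfil]; simp
  rw [Finset.mem_filter] at hxa hxb
  exact ⟨hxK, hxa.2, hxb.2, hfil⟩

lemma S_card (hG : G.IsSRGWith 75 32 10 16)
    (h5 : ∀ C : Finset V, G.IsNClique 5 C → ∀ x ∉ C, nbrs G C x = 2)
    (K : Finset V) (hK : G.IsNClique 5 K) {a b : V} (ha : a ∈ K) (hb : b ∈ K)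
    (hab : a ≠ b) :
    ((univ \ K).filter (fun x => K.filter (fun y => G.Adj x y) = {a, b})).card = 7 := by
  classical
  set S := (univ \ K).filter (fun x => K.filter (fun y => G.Adj x y) = {a, b}) with hS
  have hadj_ab : G.Adj a b := hK.1 (Finset.mem_coe.2 ha) (Finset.mem_coe.2 hb) hab
  set F := univ.filter (fun c => G.Adj a c ∧ G.Adj b c) with hF
  have hF10 : F.card = 10 := by
    have := hG.of_adj a b hadj_ab
    rw [← this, ← Set.toFinset_card]
    congr 1
    ext c
    simp [hF, SimpleGraph.mem_commonNeighbors]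
  have hsplit := Finset.card_filter_add_card_filter_not (s := F) (p := fun c => c ∈ K)
  have h1 : F.filter (fun c => c ∈ K) = K \ {a, b} := by
    ext c
    simp only [hF, Finset.mem_filter, Finset.mem_univ, true_and, Finset.mem_sdiff,
      Finset.mem_insert, Finset.mem_singleton, not_or]
    constructor
    · rintro ⟨⟨hac, hbc⟩, hcK⟩
      exact ⟨hcK, fun h => G.irrefl (h ▸ hac), fun h => G.irrefl (h ▸ hbc)⟩
    · rintro ⟨hcK, hca, hcb⟩
      exact ⟨⟨hK.1 (Finset.mem_coe.2 ha) (Finset.mem_coe.2 hcK) (Ne.symm hca),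
        hK.1 (Finset.mem_coe.2 hb) (Finset.mem_coe.2 hcK) (Ne.symm hcb)⟩, hcK⟩
  have h2 : F.filter (fun c => c ∉ K) = S := by
    ext c
    simp only [hF, hS, Finset.mem_filter, Finset.mem_univ, true_and, Finset.mem_sdiff]
    constructor
    · rintro ⟨⟨hac, hbc⟩, hcK⟩
      refine ⟨hcK, ?_⟩
      have hsub : {a, b} ⊆ K.filter (fun y => G.Adj c y) := by
        intro d hd
        rcases Finset.mem_insert.1 hd with rfl | hd
        · exact Finset.mem_filter.2 ⟨ha, hac.symm⟩
        · rw [Finset.mem_singleton] at hd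
          subst hd
          exact Finset.mem_filter.2 ⟨hb, hbc.symm⟩
      have hcardf : (K.filter (fun y => G.Adj c y)).card = 2 := h5 K hK c hcK
      have : {a, b} = K.filter (fun y => G.Adj c y) :=
        Finset.eq_of_subset_of_card_le hsub (by rw [hcardf, Finset.card_pair hab])
      exact this.symm
    · rintro ⟨hcK, hfil⟩
      have hca : a ∈ K.filter (fun y => G.Adj c y) := by rw [hfil]; simp
      have hcb : b ∈ K.filter (fun y => G.Adj c y) := by rw [hfil]; simp
      rw [Finset.mem_filter] at hca hcb
      exact ⟨⟨hca.2.symm, hcb.2.symm⟩, hcK⟩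
  have hsubK : ({a, b} : Finset V) ⊆ K := by
    intro c hc
    rcases Finset.mem_insert.1 hc with rfl | hc
    · exact ha
    · rw [Finset.mem_singleton] at hc; subst hc; exact hb
  have hKd : (K \ {a, b}).card = 3 := by
    rw [Finset.card_sdiff_of_subset hsubK, hK.2, Finset.card_pair hab]
  rw [h1, h2, hKd, hF10] at hsplit
  omega

lemma triangle_lemma
    (h5 : ∀ C : Finset V, G.IsNClique 5 C → ∀ x ∉ C, nbrs G C x = 2)
    (h4 : ∀ s : Finset V, G.IsNClique 4 s → ∃ t, G.IsNClique 5 t ∧ s ⊆ t)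
    (K : Finset V) (hK : G.IsNClique 5 K) {a b : V} (ha : a ∈ K) (hb : b ∈ K)
    (hab : a ≠ b)
    (S : Finset V)
    (hS : S = (univ \ K).filter (fun x => K.filter (fun y => G.Adj x y) = {a, b}))
    {x y : V} (hx : x ∈ S) (hy : y ∈ S) (hxy : G.Adj x y) :
    ∃ z ∈ S, z ≠ x ∧ z ≠ y ∧ G.Adj x z ∧ G.Adj y z ∧
      ∀ w ∈ S, w ≠ x → w ≠ y → w ≠ z → ¬G.Adj w x ∧ ¬G.Adj w y ∧ ¬G.Adj w z := by
  classical
  subst hS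
  obtain ⟨hxK, hxa, hxb, hxfil⟩ := mem_S_iff G K hx
  obtain ⟨hyK, hya, hyb, hyfil⟩ := mem_S_iff G K hy
  have hxy' : x ≠ y := hxy.ne
  have hxna : x ≠ a := fun h => hxK (h ▸ ha)
  have hxnb : x ≠ b := fun h => hxK (h ▸ hb)
  have hyna : y ≠ a := fun h => hyK (h ▸ ha)
  have hynb : y ≠ b := fun h => hyK (h ▸ hb)
  have hadj_ab : G.Adj a b := hK.1 (Finset.mem_coe.2 ha) (Finset.mem_coe.2 hb) hab
  have c1 : G.IsNClique 1 ({y} : Finset V) := SimpleGraph.isNClique_singleton.2 rfl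
  have c2 : G.IsNClique 2 (insert x {y}) := c1.insert (by
    intro c hc; rw [Finset.mem_singleton] at hc; subst hc; exact hxy)
  have c3 : G.IsNClique 3 (insert b (insert x {y})) := c2.insert (by
    intro c hc
    rcases Finset.mem_insert.1 hc with rfl | hc
    · exact hxb.symm
    · rw [Finset.mem_singleton] at hc; subst hc; exact hyb.symm)
  have c4 : G.IsNClique 4 (insert a (insert b (insert x {y}))) := c3.insert (by
    intro c hc
    rcases Finset.mem_insert.1 hc with rfl | hc
    · exact hadj_ab
    rcases Finset.mem_insert.1 hc with rfl | hc
    · exact hxa.symm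
    · rw [Finset.mem_singleton] at hc; subst hc; exact hya.symm)
  set s : Finset V := insert a (insert b (insert x {y})) with hs_def
  obtain ⟨t, ht5, hst⟩ := h4 s c4
  have hsc : s.card = 4 := c4.2
  have htsd : (t \ s).card = 1 := by
    rw [Finset.card_sdiff_of_subset hst, ht5.2, hsc]
  obtain ⟨z, hz_eq⟩ := Finset.card_eq_one.1 htsd
  have hzts : z ∈ t \ s := hz_eq ▸ Finset.mem_singleton_self z
  have hzt : z ∈ t := (Finset.mem_sdiff.1 hzts).1
  have hzs : z ∉ s := (Finset.mem_sdiff.1 hzts).2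
  have ht_eq : t = insert z s := by
    apply Finset.Subset.antisymm
    · intro c hc
      by_cases hcs : c ∈ s
      · exact Finset.mem_insert_of_mem hcs
      · have : c ∈ t \ s := Finset.mem_sdiff.2 ⟨hc, hcs⟩
        rw [hz_eq, Finset.mem_singleton] at this
        exact this ▸ Finset.mem_insert_self _ _
    · intro c hc
      rcases Finset.mem_insert.1 hc with rfl | hc
      · exact hzt
      · exact hst hc
  have hat : a ∈ t := hst (by simp [hs_def])
  have hbt : b ∈ t := hst (by simp [hs_def])
  have hxt : x ∈ t := hst (by simp [hs_def])
  have hyt : y ∈ t := hst (by simp [hs_def])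
  have hzna : z ≠ a := fun h => hzs (by simp [hs_def, h])
  have hznb : z ≠ b := fun h => hzs (by simp [hs_def, h])
  have hznx : z ≠ x := fun h => hzs (by simp [hs_def, h])
  have hzny : z ≠ y := fun h => hzs (by simp [hs_def, h])
  have hza : G.Adj z a := ht5.1 (Finset.mem_coe.2 hzt) (Finset.mem_coe.2 hat) hzna
  have hzb : G.Adj z b := ht5.1 (Finset.mem_coe.2 hzt) (Finset.mem_coe.2 hbt) hznb
  have hxz : G.Adj x z := ht5.1 (Finset.mem_coe.2 hxt) (Finset.mem_coe.2 hzt) hznx.symm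
  have hyz : G.Adj y z := ht5.1 (Finset.mem_coe.2 hyt) (Finset.mem_coe.2 hzt) hzny.symm
  have hzK : z ∉ K := by
    intro hzK
    have : z ∈ K.filter (fun c => G.Adj x c) := Finset.mem_filter.2 ⟨hzK, hxz⟩
    rw [hxfil] at this
    rcases Finset.mem_insert.1 this with rfl | h
    · exact hzna rfl
    · rw [Finset.mem_singleton] at h; exact hznb h
  have hzS : z ∈ (univ \ K).filter (fun c => K.filter (fun y => G.Adj c y) = {a, b}) := by
    rw [Finset.mem_filter]
    refine ⟨Finset.mem_sdiff.2 ⟨Finset.mem_univ _, hzK⟩, ?_⟩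
    have hsub : ({a, b} : Finset V) ⊆ K.filter (fun c => G.Adj z c) := by
      intro c hc
      rcases Finset.mem_insert.1 hc with rfl | hc
      · exact Finset.mem_filter.2 ⟨ha, hza⟩
      · rw [Finset.mem_singleton] at hc; subst hc; exact Finset.mem_filter.2 ⟨hb, hzb⟩
    have hcardf : (K.filter (fun c => G.Adj z c)).card = 2 := h5 K hK z hzK
    exact (Finset.eq_of_subset_of_card_le hsub
      (by rw [hcardf, Finset.card_pair hab])).symm
  refine ⟨z, hzS, hznx, hzny, hxz, hyz, ?_⟩
  intro w hw hwx hwy hwz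
  obtain ⟨hwK, hwa, hwb, hwfil⟩ := mem_S_iff G K hw
  have hwt : w ∉ t := by
    rw [ht_eq]
    simp only [hs_def, Finset.mem_insert, Finset.mem_singleton, not_or]
    exact ⟨hwz, fun h => hwK (h ▸ ha), fun h => hwK (h ▸ hb), hwx, hwy⟩
  have hwfil2 : t.filter (fun c => G.Adj w c) = {a, b} := by
    have hsub : ({a, b} : Finset V) ⊆ t.filter (fun c => G.Adj w c) := by
      intro c hc
      rcases Finset.mem_insert.1 hc with rfl | hc
      · exact Finset.mem_filter.2 ⟨hat, hwa⟩
      · rw [Finset.mem_singleton] at hc; subst hc; exact Finset.mem_filter.2 ⟨hbt, hwb⟩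
    have hcardf : (t.filter (fun c => G.Adj w c)).card = 2 := h5 t ht5 w hwt
    exact (Finset.eq_of_subset_of_card_le hsub
      (by rw [hcardf, Finset.card_pair hab])).symm
  have key : ∀ c ∈ t, c ∉ K → ¬G.Adj w c := by
    intro c hct hcK hadj
    have : c ∈ t.filter (fun c => G.Adj w c) := Finset.mem_filter.2 ⟨hct, hadj⟩
    rw [hwfil2] at this
    rcases Finset.mem_insert.1 this with rfl | h
    · exact hcK ha
    · rw [Finset.mem_singleton] at h; exact hcK (h ▸ hb)
  exact ⟨key x hxt hxK, key y hyt hyK, key z hzt hzK⟩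

lemma build_one (S : Finset V) (hS7 : S.card = 7) (x y z p q r t : V)
    (hxS : x ∈ S) (hyS : y ∈ S) (hzS : z ∈ S) (hpS : p ∈ S) (hqS : q ∈ S)
    (hrS : r ∈ S) (htS : t ∈ S)
    (hxy : G.Adj x y) (hxz : G.Adj x z) (hyz : G.Adj y z)
    (hpq : p ≠ q) (hpr : p ≠ r) (hpt : p ≠ t) (hqr : q ≠ r) (hqt : q ≠ t) (hrt : r ≠ t)
    (hpx : ¬G.Adj p x) (hpy : ¬G.Adj p y) (hpz : ¬G.Adj p z)
    (hqx : ¬G.Adj q x) (hqy : ¬G.Adj q y) (hqz : ¬G.Adj q z)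
    (hrx : ¬G.Adj r x) (hry : ¬G.Adj r y) (hrz : ¬G.Adj r z)
    (htx : ¬G.Adj t x) (hty : ¬G.Adj t y) (htz : ¬G.Adj t z)
    (npq : ¬G.Adj p q) (npr : ¬G.Adj p r) (npt : ¬G.Adj p t)
    (nqr : ¬G.Adj q r) (nqt : ¬G.Adj q t) (nrt : ¬G.Adj r t)
    (dpx : p ≠ x) (dpy : p ≠ y) (dpz : p ≠ z)
    (dqx : q ≠ x) (dqy : q ≠ y) (dqz : q ≠ z)
    (drx : r ≠ x) (dry : r ≠ y) (drz : r ≠ z)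
    (dtx : t ≠ x) (dty : t ≠ y) (dtz : t ≠ z) :
    Nonempty (G.induce (S : Set V) ≃g triangleOne) := by
  have hxy' : x ≠ y := hxy.ne
  have hxz' : x ≠ z := hxz.ne
  have hyz' : y ≠ z := hyz.ne
  have hyx : G.Adj y x := hxy.symm
  have hzx : G.Adj z x := hxz.symm
  have hzy : G.Adj z y := hyz.symm
  have nxp : ¬G.Adj x p := fun h => hpx h.symm
  have nxq : ¬G.Adj x q := fun h => hqx h.symm
  have nxr : ¬G.Adj x r := fun h => hrx h.symm
  have nxt : ¬G.Adj x t := fun h => htx h.symm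
  have nyp : ¬G.Adj y p := fun h => hpy h.symm
  have nyq : ¬G.Adj y q := fun h => hqy h.symm
  have nyr : ¬G.Adj y r := fun h => hry h.symm
  have nyt : ¬G.Adj y t := fun h => hty h.symm
  have nzp : ¬G.Adj z p := fun h => hpz h.symm
  have nzq : ¬G.Adj z q := fun h => hqz h.symm
  have nzr : ¬G.Adj z r := fun h => hrz h.symm
  have nzt : ¬G.Adj z t := fun h => htz h.symm
  have nqp : ¬G.Adj q p := fun h => npq h.symm
  have nrp : ¬G.Adj r p := fun h => npr h.symm
  have ntp : ¬G.Adj t p := fun h => npt h.symm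
  have nrq : ¬G.Adj r q := fun h => nqr h.symm
  have ntq : ¬G.Adj t q := fun h => nqt h.symm
  have ntr : ¬G.Adj t r := fun h => nrt h.symm
  have nxx : ¬G.Adj x x := G.irrefl
  have nyy : ¬G.Adj y y := G.irrefl
  have nzz : ¬G.Adj z z := G.irrefl
  have npp : ¬G.Adj p p := G.irrefl
  have nqq : ¬G.Adj q q := G.irrefl
  have nrr : ¬G.Adj r r := G.irrefl
  have ntt : ¬G.Adj t t := G.irrefl
  apply iso_builder G S hS7 triangleOne (pick7 x y z p q r t)
  · intro i; fin_cases i <;> assumption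
  · intro i j h
    fin_cases i <;> fin_cases j <;>
      first
        | rfl
        | exact absurd h (by assumption)
        | exact absurd h.symm (by assumption)
  · intro i j
    fin_cases i <;> fin_cases j <;>
      first
        | exact iff_of_true (by assumption)
            (by simp only [triangleOne, SimpleGraph.fromRel_adj]; decide)
        | exact iff_of_false (by assumption)
            (by simp only [triangleOne, SimpleGraph.fromRel_adj]; decide)

lemma build_two (S : Finset V) (hS7 : S.card = 7) (x y z u v w p : V)
    (hxS : x ∈ S) (hyS : y ∈ S) (hzS : z ∈ S) (huS : u ∈ S) (hvS : v ∈ S)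
    (hwS : w ∈ S) (hpS : p ∈ S)
    (hxy : G.Adj x y) (hxz : G.Adj x z) (hyz : G.Adj y z)
    (huv : G.Adj u v) (huw : G.Adj u w) (hvw : G.Adj v w)
    (dux : u ≠ x) (duy : u ≠ y) (duz : u ≠ z)
    (dvx : v ≠ x) (dvy : v ≠ y) (dvz : v ≠ z)
    (dwx : w ≠ x) (dwy : w ≠ y) (dwz : w ≠ z)
    (dpx : p ≠ x) (dpy : p ≠ y) (dpz : p ≠ z)
    (dpu : p ≠ u) (dpv : p ≠ v) (dpw : p ≠ w)
    (hux : ¬G.Adj u x) (huy : ¬G.Adj u y) (huz : ¬G.Adj u z)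
    (hvx : ¬G.Adj v x) (hvy : ¬G.Adj v y) (hvz : ¬G.Adj v z)
    (hwx : ¬G.Adj w x) (hwy : ¬G.Adj w y) (hwz : ¬G.Adj w z)
    (hpx : ¬G.Adj p x) (hpy : ¬G.Adj p y) (hpz : ¬G.Adj p z)
    (hpu : ¬G.Adj p u) (hpv : ¬G.Adj p v) (hpw : ¬G.Adj p w) :
    Nonempty (G.induce (S : Set V) ≃g triangleTwo) := by
  have hyx : G.Adj y x := hxy.symm
  have hzx : G.Adj z x := hxz.symm
  have hzy : G.Adj z y := hyz.symm
  have hvu : G.Adj v u := huv.symm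
  have hwu : G.Adj w u := huw.symm
  have hwv : G.Adj w v := hvw.symm
  have nxu : ¬G.Adj x u := fun h => hux h.symm
  have nxv : ¬G.Adj x v := fun h => hvx h.symm
  have nxw : ¬G.Adj x w := fun h => hwx h.symm
  have nxp : ¬G.Adj x p := fun h => hpx h.symm
  have nyu : ¬G.Adj y u := fun h => huy h.symm
  have nyv : ¬G.Adj y v := fun h => hvy h.symm
  have nyw : ¬G.Adj y w := fun h => hwy h.symm
  have nyp : ¬G.Adj y p := fun h => hpy h.symm
  have nzu : ¬G.Adj z u := fun h => huz h.symm
  have nzv : ¬G.Adj z v := fun h => hvz h.symm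
  have nzw : ¬G.Adj z w := fun h => hwz h.symm
  have nzp : ¬G.Adj z p := fun h => hpz h.symm
  have nup : ¬G.Adj u p := fun h => hpu h.symm
  have nvp : ¬G.Adj v p := fun h => hpv h.symm
  have nwp : ¬G.Adj w p := fun h => hpw h.symm
  have nxx : ¬G.Adj x x := G.irrefl
  have nyy : ¬G.Adj y y := G.irrefl
  have nzz : ¬G.Adj z z := G.irrefl
  have nuu : ¬G.Adj u u := G.irrefl
  have nvv : ¬G.Adj v v := G.irrefl
  have nww : ¬G.Adj w w := G.irrefl
  have npp : ¬G.Adj p p := G.irrefl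
  have hxy' : x ≠ y := hxy.ne
  have hxz' : x ≠ z := hxz.ne
  have hyz' : y ≠ z := hyz.ne
  have huv' : u ≠ v := huv.ne
  have huw' : u ≠ w := huw.ne
  have hvw' : v ≠ w := hvw.ne
  apply iso_builder G S hS7 triangleTwo (pick7 x y z u v w p)
  · intro i; fin_cases i <;> assumption
  · intro i j h
    fin_cases i <;> fin_cases j <;>
      first
        | rfl
        | exact absurd h (by assumption)
        | exact absurd h.symm (by assumption)
  · intro i j
    fin_cases i <;> fin_cases j <;>
      first
        | exact iff_of_true (by assumption)
            (by simp only [triangleTwo, SimpleGraph.fromRel_adj]; decide)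
        | exact iff_of_false (by assumption)
            (by simp only [triangleTwo, SimpleGraph.fromRel_adj]; decide)

end Main

/-- For a 5-clique `K` in a (75,32,10,16) SRG (with the stated clique
properties), the induced subgraph on each part `X_{i,j}` is isomorphic to the
empty graph on 7 vertices, a triangle plus 4 isolated vertices, or two
triangles plus one isolated vertex. -/
theorem stmt12 {V : Type*} [Fintype V] [DecidableEq V]
    (G : SimpleGraph V) [DecidableRel G.Adj]
    (hG : G.IsSRGWith 75 32 10 16)
    (h5 : ∀ C : Finset V, G.IsNClique 5 C → ∀ x ∉ C, nbrs G C x = 2)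
    (h4 : ∀ s : Finset V, G.IsNClique 4 s → ∃ t, G.IsNClique 5 t ∧ s ⊆ t)
    (K : Finset V) (hK : G.IsNClique 5 K) :
    ∀ a ∈ K, ∀ b ∈ K, a ≠ b →
      ∀ S : Finset V,
        S = (univ \ K).filter (fun x => K.filter (fun y => G.Adj x y) = {a, b}) →
        (Nonempty (G.induce (S : Set V) ≃g (⊥ : SimpleGraph (Fin 7))) ∨
         Nonempty (G.induce (S : Set V) ≃g triangleOne) ∨
         Nonempty (G.induce (S : Set V) ≃g triangleTwo)) := by
  intro a ha b hb hab S hS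
  classical
  have hS7 : S.card = 7 := by rw [hS]; exact S_card G hG h5 K hK ha hb hab
  by_cases hE : ∀ x ∈ S, ∀ y ∈ S, ¬G.Adj x y
  · left
    have hc : Fintype.card (S : Set V) = 7 := by simp [hS7]
    refine ⟨RelIso.mk (Fintype.equivFinOfCardEq hc) ?_⟩
    intro c d
    refine iff_of_false (by simp) ?_
    exact fun h => hE c.1 (Finset.mem_coe.1 c.2) d.1 (Finset.mem_coe.1 d.2) h
  · push_neg at hE
    obtain ⟨x, hxS, y, hyS, hxy⟩ := hE
    obtain ⟨z, hzS', hznx, hzny, hxz, hyz, hprop⟩ :=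
      triangle_lemma G h5 h4 K hK ha hb hab S hS hxS hyS hxy
    have hzS : z ∈ S := hzS'
    set R := S \ {x, y, z} with hR
    have hsub : ({x, y, z} : Finset V) ⊆ S := by
      intro c hc
      rcases Finset.mem_insert.1 hc with rfl | hc
      · exact hxS
      rcases Finset.mem_insert.1 hc with rfl | hc
      · exact hyS
      · rw [Finset.mem_singleton] at hc; subst hc; exact hzS
    have h3 : ({x, y, z} : Finset V).card = 3 :=
      Finset.card_eq_three.mpr ⟨x, y, z, hxy.ne, Ne.symm hznx, Ne.symm hzny, rfl⟩
    have hR4 : R.card = 4 := by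
      rw [hR, Finset.card_sdiff_of_subset hsub, hS7, h3]
    have hRmem : ∀ c ∈ R, c ∈ S ∧ c ≠ x ∧ c ≠ y ∧ c ≠ z := by
      intro c hc
      simp only [hR, Finset.mem_sdiff, Finset.mem_insert, Finset.mem_singleton, not_or] at hc
      exact ⟨hc.1, hc.2.1, hc.2.2.1, hc.2.2.2⟩
    by_cases hE2 : ∀ u ∈ R, ∀ v ∈ R, ¬G.Adj u v
    · right; left
      obtain ⟨p, q, r, t, hpq, hpr, hpt, hqr, hqt, hrt, hReq⟩ := card_four' hR4
      have hpR : p ∈ R := by rw [hReq]; simp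
      have hqR : q ∈ R := by rw [hReq]; simp
      have hrR : r ∈ R := by rw [hReq]; simp
      have htR : t ∈ R := by rw [hReq]; simp
      obtain ⟨hpS, dpx, dpy, dpz⟩ := hRmem p hpR
      obtain ⟨hqS, dqx, dqy, dqz⟩ := hRmem q hqR
      obtain ⟨hrS, drx, dry, drz⟩ := hRmem r hrR
      obtain ⟨htS, dtx, dty, dtz⟩ := hRmem t htR
      obtain ⟨hpx, hpy, hpz⟩ := hprop p hpS dpx dpy dpz
      obtain ⟨hqx, hqy, hqz⟩ := hprop q hqS dqx dqy dqz
      obtain ⟨hrx, hry, hrz⟩ := hprop r hrS drx dry drz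
      obtain ⟨htx, hty, htz⟩ := hprop t htS dtx dty dtz
      exact build_one G S hS7 x y z p q r t hxS hyS hzS hpS hqS hrS htS
        hxy hxz hyz hpq hpr hpt hqr hqt hrt
        hpx hpy hpz hqx hqy hqz hrx hry hrz htx hty htz
        (hE2 p hpR q hqR) (hE2 p hpR r hrR) (hE2 p hpR t htR)
        (hE2 q hqR r hrR) (hE2 q hqR t htR) (hE2 r hrR t htR)
        dpx dpy dpz dqx dqy dqz drx dry drz dtx dty dtz
    · right; right
      push_neg at hE2
      obtain ⟨u, huR, v, hvR, huv⟩ := hE2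
      obtain ⟨huS, dux, duy, duz⟩ := hRmem u huR
      obtain ⟨hvS, dvx, dvy, dvz⟩ := hRmem v hvR
      obtain ⟨w, hwS', hwnu, hwnv, huw, hvw, hprop2⟩ :=
        triangle_lemma G h5 h4 K hK ha hb hab S hS huS hvS huv
      have hwS : w ∈ S := hwS'
      obtain ⟨hux, huy, huz⟩ := hprop u huS dux duy duz
      obtain ⟨hvx, hvy, hvz⟩ := hprop v hvS dvx dvy dvz
      have dwx : w ≠ x := fun h => hux (h ▸ huw)
      have dwy : w ≠ y := fun h => huy (h ▸ huw)
      have dwz : w ≠ z := fun h => huz (h ▸ huw)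
      obtain ⟨hwx, hwy, hwz⟩ := hprop w hwS dwx dwy dwz
      have hwR : w ∈ R := by
        simp only [hR, Finset.mem_sdiff, Finset.mem_insert, Finset.mem_singleton, not_or]
        exact ⟨hwS, dwx, dwy, dwz⟩
      -- extract the last vertex p
      have hsub2 : ({u, v, w} : Finset V) ⊆ R := by
        intro c hc
        rcases Finset.mem_insert.1 hc with rfl | hc
        · exact huR
        rcases Finset.mem_insert.1 hc with rfl | hc
        · exact hvR
        · rw [Finset.mem_singleton] at hc; subst hc; exact hwR
      have h3' : ({u, v, w} : Finset V).card = 3 :=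
        Finset.card_eq_three.mpr ⟨u, v, w, huv.ne, Ne.symm hwnu, Ne.symm hwnv, rfl⟩
      have hT1 : (R \ {u, v, w}).card = 1 := by
        rw [Finset.card_sdiff_of_subset hsub2, hR4, h3']
      obtain ⟨p, hp_eq⟩ := Finset.card_eq_one.1 hT1
      have hpT : p ∈ R \ {u, v, w} := hp_eq ▸ Finset.mem_singleton_self p
      rw [Finset.mem_sdiff] at hpT
      obtain ⟨hpS, dpx, dpy, dpz⟩ := hRmem p hpT.1
      have hpmem := hpT.2
      simp only [Finset.mem_insert, Finset.mem_singleton, not_or] at hpmem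
      obtain ⟨dpu, dpv, dpw⟩ := hpmem
      obtain ⟨hpx, hpy, hpz⟩ := hprop p hpS dpx dpy dpz
      obtain ⟨hpu, hpv, hpw⟩ := hprop2 p hpS dpu dpv dpw
      exact build_two G S hS7 x y z u v w p hxS hyS hzS huS hvS hwS hpS
        hxy hxz hyz huv huw hvw
        dux duy duz dvx dvy dvz dwx dwy dwz dpx dpy dpz dpu dpv dpw
        hux huy huz hvx hvy hvz hwx hwy hwz hpx hpy hpz hpu hpv hpw
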